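/- Let T = wT_φ on C(K) with φ a non-surjective homeomorphism of K into itself, L = ⋂_{n≥0} φⁿ(K), N = L \ Int_K(L), M = K \ Int_K(L). If |λ| > ρ(T, C(N)) and λ ∉ σ₂(T, C(L)), then λ ∉ σ₂(T), where σ₂ denotes the upper semi-Fredholm spectrum. -/

import Mathlib

set_option maxHeartbeats 4000000

open Filter Topology


lemma aux_infDist_bound {X Y : Type*} [NormedAddCommGroup X] [NormedSpace ℂ X]
    [NormedAddCommGroup Y] [NormedSpace ℂ Y] [CompleteSpace X] [CompleteSpace Y]
    (S : X →L[ℂ] Y) (hr : IsClosed (Set.range S))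
    (hk : FiniteDimensional ℂ (LinearMap.ker (S : X →ₗ[ℂ] Y))) :
    ∃ C : ℝ, 0 ≤ C ∧ ∀ x, Metric.infDist x (LinearMap.ker (S : X →ₗ[ℂ] Y) : Set X) ≤ C * ‖S x‖ := by
  haveI := hk
  obtain ⟨π, hπ⟩ := Submodule.ClosedComplemented.of_finiteDimensional (LinearMap.ker (S : X →ₗ[ℂ] Y))
  set π' : X →L[ℂ] X := (LinearMap.ker (S : X →ₗ[ℂ] Y)).subtypeL.comp π with hπ'def
  have hπ'mem : ∀ x, π' x ∈ LinearMap.ker (S : X →ₗ[ℂ] Y) := fun x => (π x).2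
  have hπ'id : ∀ x ∈ LinearMap.ker (S : X →ₗ[ℂ] Y), π' x = x := by
    intro x hx
    simp only [hπ'def, ContinuousLinearMap.comp_apply]
    rw [hπ ⟨x, hx⟩]; rfl
  set W : Submodule ℂ X := LinearMap.ker (π' : X →ₗ[ℂ] X) with hWdef
  have hmemW : ∀ x : X, x - π' x ∈ W := by
    intro x
    have h2 : π' (π' x) = π' x := hπ'id _ (hπ'mem x)
    have : π' (x - π' x) = 0 := by rw [map_sub, h2, sub_self]
    exact LinearMap.mem_ker.mpr this
  haveI : CompleteSpace W := (ContinuousLinearMap.isClosed_ker π').completeSpace_coe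
  set Rg : Submodule ℂ Y := LinearMap.range (S : X →ₗ[ℂ] Y) with hRgdef
  have hRgset : (Rg : Set Y) = Set.range S := by ext y; simp [hRgdef]
  haveI : CompleteSpace Rg := by
    have : IsClosed (Rg : Set Y) := by rw [hRgset]; exact hr
    exact this.completeSpace_coe
  set Φ : W →L[ℂ] Rg :=
    ContinuousLinearMap.codRestrict (S.comp W.subtypeL) Rg
      (fun x => LinearMap.mem_range_self _ _) with hΦdef
  have hΦapp : ∀ x : W, (Φ x : Y) = S x := fun x => rfl
  have hinj : LinearMap.ker (Φ : W →ₗ[ℂ] Rg) = ⊥ := by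
    rw [LinearMap.ker_eq_bot']
    intro x hx
    have hxS : (x : X) ∈ LinearMap.ker (S : X →ₗ[ℂ] Y) := by
      have := congrArg (Subtype.val) hx
      rw [ContinuousLinearMap.coe_coe, hΦapp] at this
      simpa [LinearMap.mem_ker] using this
    have h1 : π' (x : X) = (x : X) := hπ'id _ hxS
    have h2 : π' (x : X) = 0 := x.2
    ext1
    rw [← h1, h2]
    simp
  have hsurj : LinearMap.range (Φ : W →ₗ[ℂ] Rg) = ⊤ := by
    rw [LinearMap.range_eq_top]
    rintro ⟨y, hy⟩
    obtain ⟨x, hx⟩ := hy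
    refine ⟨⟨x - π' x, hmemW x⟩, ?_⟩
    ext1
    show S (x - π' x) = y
    have : S (π' x) = 0 := hπ'mem x
    rw [map_sub, this, sub_zero]; exact hx
  set e := ContinuousLinearEquiv.ofBijective Φ hinj hsurj with hedef
  refine ⟨‖(e.symm : Rg →L[ℂ] W)‖, norm_nonneg _, fun x => ?_⟩
  have h1 : Metric.infDist x (LinearMap.ker (S : X →ₗ[ℂ] Y) : Set X) ≤ ‖x - π' x‖ := by
    have := Metric.infDist_le_dist_of_mem (x := x) (y := π' x) (hπ'mem x)
    rwa [dist_eq_norm] at this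
  have h3 : (⟨x - π' x, hmemW x⟩ : W) = e.symm (Φ ⟨x - π' x, hmemW x⟩) :=
    (ContinuousLinearEquiv.ofBijective_symm_apply_apply Φ hinj hsurj _).symm
  have h4 : ‖x - π' x‖ = ‖e.symm (Φ ⟨x - π' x, hmemW x⟩)‖ := by
    rw [← h3]; rfl
  have h5 : ‖e.symm (Φ ⟨x - π' x, hmemW x⟩)‖ ≤ ‖(e.symm : Rg →L[ℂ] W)‖ * ‖Φ ⟨x - π' x, hmemW x⟩‖ :=
    (e.symm : Rg →L[ℂ] W).le_opNorm _
  have h6 : ‖Φ (⟨x - π' x, hmemW x⟩ : W)‖ = ‖S x‖ := by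
    have hc : (Φ (⟨x - π' x, hmemW x⟩ : W) : Y) = S x := by
      rw [hΦapp]
      show S (x - π' x) = S x
      have : S (π' x) = 0 := hπ'mem x
      rw [map_sub, this, sub_zero]
    calc ‖Φ (⟨x - π' x, hmemW x⟩ : W)‖ = ‖(Φ (⟨x - π' x, hmemW x⟩ : W) : Y)‖ := rfl
    _ = ‖S x‖ := by rw [hc]
  calc Metric.infDist x (LinearMap.ker (S : X →ₗ[ℂ] Y) : Set X) ≤ ‖x - π' x‖ := h1
    _ ≤ ‖(e.symm : Rg →L[ℂ] W)‖ * ‖Φ ⟨x - π' x, hmemW x⟩‖ := by rw [h4]; exact h5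
    _ = ‖(e.symm : Rg →L[ℂ] W)‖ * ‖S x‖ := by rw [h6]

/-- if `|λ| > ρ(T, C(N))` and `λ ∉ σ₂(T, C(L))`, then `λ ∉ σ₂(T)`. -/
theorem stmt12 (K : Type*) [TopologicalSpace K] [CompactSpace K] [T2Space K]
    (φ : K → K) (hφc : Continuous φ) (hφi : Function.Injective φ)
    (hns : Set.range φ ≠ Set.univ)
    (w : C(K, ℂ)) (T : C(K, ℂ) →L[ℂ] C(K, ℂ))
    (hT : ∀ (f : C(K, ℂ)) (k : K), T f k = w k * f (φ k))
    (L N : Set K) [CompactSpace L] [CompactSpace N]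
    (hL : L = ⋂ n : ℕ, φ^[n] '' Set.univ)
    (hN : N = L \ interior L)
    (hφL : ∀ k ∈ L, φ k ∈ L) (hφN : ∀ k ∈ N, φ k ∈ N)
    (TL : C(L, ℂ) →L[ℂ] C(L, ℂ))
    (hTL : ∀ (f : C(L, ℂ)) (k : L), TL f k = w k.1 * f ⟨φ k.1, hφL k.1 k.2⟩)
    (TN : C(N, ℂ) →L[ℂ] C(N, ℂ))
    (hTN : ∀ (f : C(N, ℂ)) (k : N), TN f k = w k.1 * f ⟨φ k.1, hφN k.1 k.2⟩)
    (lam : ℂ)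
    (hlam : spectralRadius ℂ TN < (‖lam‖₊ : ENNReal))
    (hUSFL : IsClosed (Set.range (lam • ContinuousLinearMap.id ℂ C(L, ℂ) - TL)) ∧
        FiniteDimensional ℂ (LinearMap.ker (((lam • ContinuousLinearMap.id ℂ C(L, ℂ) - TL : C(L, ℂ) →L[ℂ] C(L, ℂ)) : C(L, ℂ) →ₗ[ℂ] C(L, ℂ))))) :
    IsClosed (Set.range (lam • ContinuousLinearMap.id ℂ C(K, ℂ) - T)) ∧
      FiniteDimensional ℂ (LinearMap.ker (((lam • ContinuousLinearMap.id ℂ C(K, ℂ) - T : C(K, ℂ) →L[ℂ] C(K, ℂ)) : C(K, ℂ) →ₗ[ℂ] C(K, ℂ)))) := by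
  classical
  obtain ⟨hSLrange, hSLker⟩ := hUSFL
  set S : C(K,ℂ) →L[ℂ] C(K,ℂ) := lam • ContinuousLinearMap.id ℂ C(K, ℂ) - T with hSdef
  set SL : C(L,ℂ) →L[ℂ] C(L,ℂ) := lam • ContinuousLinearMap.id ℂ C(L, ℂ) - TL with hSLdef
  have hSapp : ∀ (f : C(K,ℂ)) (k : K), S f k = lam * f k - w k * f (φ k) := by
    intro f k
    rw [hSdef]
    simp [ContinuousLinearMap.sub_apply, ContinuousLinearMap.smul_apply, hT f k]
  have hSLapp : ∀ (u : C(L,ℂ)) (k : L), SL u k = lam * u k - w k.1 * u ⟨φ k.1, hφL k.1 k.2⟩ := by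
    intro u k
    rw [hSLdef]
    simp [ContinuousLinearMap.sub_apply, ContinuousLinearMap.smul_apply, hTL u k]
  -- restriction operator
  set R : C(K,ℂ) →L[ℂ] C(L,ℂ) := LinearMap.mkContinuous
    { toFun := fun f => f.restrict L
      map_add' := fun f g => rfl
      map_smul' := fun c f => rfl } 1
    (fun f => by
      rw [one_mul]
      refine (ContinuousMap.norm_le _ (norm_nonneg f)).2 fun x => ?_
      exact f.norm_coe_le_norm x.1) with hRdef
  have hRapp : ∀ (f : C(K,ℂ)) (k : L), R f k = f k.1 := fun f k => rfl
  have hRle : ∀ f : C(K,ℂ), ‖R f‖ ≤ ‖f‖ := fun f =>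
    (ContinuousMap.norm_le _ (norm_nonneg f)).2 fun x => f.norm_coe_le_norm x.1
  -- weights
  set wf : ℕ → K → ℂ := fun n k => ∏ i ∈ Finset.range n, w (φ^[i] k) with hwfdef
  have hwfc : ∀ n, Continuous (wf n) := by
    intro n
    apply continuous_finset_prod
    intro i _
    exact w.continuous.comp (hφc.iterate i)
  have hwf0 : ∀ k, wf 0 k = 1 := fun k => Finset.prod_range_zero _
  have hwfs : ∀ n k, wf (n+1) k = wf n k * w (φ^[n] k) := fun n k => Finset.prod_range_succ _ _
  have hwfadd : ∀ a b k, wf (a+b) k = wf a k * wf b (φ^[a] k) := by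
    intro a b k
    induction b with
    | zero => simp [hwf0]
    | succ b ih =>
      rw [← Nat.add_assoc, hwfs, ih, hwfs, mul_assoc]
      congr 3
      · rw [← Function.iterate_add_apply, Nat.add_comm]
  have hφNn : ∀ n, ∀ k ∈ N, φ^[n] k ∈ N := by
    intro n
    induction n with
    | zero => intro k hk; simpa using hk
    | succ n ih => intro k hk; rw [Function.iterate_succ_apply']; exact hφN _ (ih k hk)
  have hTNpow : ∀ n (f : C(N,ℂ)) (k : N), (TN^n) f k = wf n k.1 * f ⟨φ^[n] k.1, hφNn n k.1 k.2⟩ := by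
    intro n
    induction n with
    | zero => intro f k; simp [hwf0]
    | succ n ih =>
      intro f k
      rw [pow_succ, ContinuousLinearMap.mul_apply, ih (TN f) k, hTN, hwfs, mul_assoc]
      congr 2
      · congr 1
        exact Subtype.ext (Function.iterate_succ_apply' φ n k.1).symm
  have hwN : ∀ n, ∀ k ∈ N, ‖wf n k‖ ≤ ‖TN^n‖ := by
    intro n k hk
    have h1 : ‖wf n k‖ = ‖(TN^n) 1 ⟨k, hk⟩‖ := by rw [hTNpow]; simp
    rw [h1]
    calc ‖(TN^n) 1 ⟨k, hk⟩‖ ≤ ‖(TN^n) 1‖ := ContinuousMap.norm_coe_le_norm _ _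
      _ ≤ ‖TN^n‖ * ‖(1 : C(N,ℂ))‖ := ContinuousLinearMap.le_opNorm _ _
      _ ≤ ‖TN^n‖ * 1 := by
          gcongr
          exact (ContinuousMap.norm_le _ zero_le_one).2 fun x => by simp
      _ = ‖TN^n‖ := mul_one _
  -- Gelfand
  obtain ⟨s, hs1, hs2⟩ := exists_between hlam
  have hstop : s ≠ ⊤ := (hs2.trans_le le_top).ne
  have hs0 : s ≠ 0 := (lt_of_le_of_lt zero_le hs1).ne'
  set t : ℝ := s.toReal with htdef
  have ht0 : 0 < t := ENNReal.toReal_pos hs0 hstop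
  have htlam : t < ‖lam‖ := by
    have := ENNReal.toReal_strict_mono ENNReal.coe_ne_top hs2
    simpa using this
  have hgel := spectrum.pow_nnnorm_pow_one_div_tendsto_nhds_spectralRadius TN
  have hev : ∀ᶠ n : ℕ in atTop, ((‖TN^n‖₊ : ENNReal) ^ (1/(n:ℝ))) < s :=
    hgel.eventually_lt_const hs1
  obtain ⟨m, hm⟩ := ((eventually_ge_atTop 1).and hev).exists
  obtain ⟨hm1, hmb⟩ := hm
  have hmpow : (‖TN^m‖₊ : ENNReal) < s ^ m := by
    have hmne : (m:ℝ) ≠ 0 := Nat.cast_ne_zero.mpr (by omega)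
    have hx : (((‖TN^m‖₊ : ENNReal) ^ (1/(m:ℝ))) ^ m) = (‖TN^m‖₊ : ENNReal) := by
      rw [← ENNReal.rpow_natCast _ m, ← ENNReal.rpow_mul, one_div, inv_mul_cancel₀ hmne,
        ENNReal.rpow_one]
    calc (‖TN^m‖₊ : ENNReal) = (((‖TN^m‖₊ : ENNReal) ^ (1/(m:ℝ))) ^ m) := hx.symm
      _ < s ^ m := ENNReal.pow_lt_pow_left (by omega) hmb
  have hTNm : ‖TN^m‖ < t^m := by
    have h2 := ENNReal.toReal_strict_mono (ENNReal.pow_ne_top hstop) hmpow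
    rw [ENNReal.toReal_pow] at h2
    simpa [htdef] using h2
  -- open set V and uniform entry time p
  set V : Set K := {k | ‖wf m k‖ < t^m} with hVdef
  have hVopen : IsOpen V := isOpen_lt (Continuous.norm (hwfc m)) continuous_const
  have hNV : N ⊆ V := fun k hk => lt_of_le_of_lt (hwN m k hk) hTNm
  have hLW : L ⊆ V ∪ interior L := by
    intro k hk
    by_cases h : k ∈ interior L
    · exact Or.inr h
    · exact Or.inl (hNV (by rw [hN]; exact ⟨hk, h⟩))
  obtain ⟨p, hp⟩ : ∃ p : ℕ, ∀ x : K, φ^[p] x ∈ V ∪ interior L := by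
    by_contra hcon
    push_neg at hcon
    set A : ℕ → Set K := fun n => (φ^[n] '' Set.univ) ∩ (V ∪ interior L)ᶜ with hAdef
    have hAne : ∀ n, (A n).Nonempty := by
      intro n; obtain ⟨x, hx⟩ := hcon n; exact ⟨φ^[n] x, ⟨⟨x, trivial, rfl⟩, hx⟩⟩
    have hAcomp : ∀ n, IsCompact (A n) := fun n =>
      ((isCompact_univ.image (hφc.iterate n)).inter_right
        ((hVopen.union isOpen_interior).isClosed_compl))
    have hAclosed : ∀ n, IsClosed (A n) := fun n => (hAcomp n).isClosed
    have hAdec : ∀ n, A (n+1) ⊆ A n := by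
      intro n x hx
      refine ⟨?_, hx.2⟩
      obtain ⟨y, -, hy⟩ := hx.1
      exact ⟨φ y, trivial, by rw [← hy, Function.iterate_succ_apply]⟩
    obtain ⟨x, hx⟩ := IsCompact.nonempty_iInter_of_sequence_nonempty_isCompact_isClosed
      A hAdec hAne (hAcomp 0) hAclosed
    have hxmem := Set.mem_iInter.1 hx
    have hxL : x ∈ L := by
      rw [hL, Set.mem_iInter]; intro n; exact (hxmem n).1
    exact (hxmem 0).2 (hLW hxL)
  -- invariance of the complement of interior L
  have hM : ∀ k : K, φ k ∈ interior L → k ∈ interior L := by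
    intro k hk
    have hUopen : IsOpen (φ ⁻¹' interior L) := isOpen_interior.preimage hφc
    have hUL : φ ⁻¹' interior L ⊆ L := by
      intro u hu
      have huL : φ u ∈ L := interior_subset hu
      rw [hL, Set.mem_iInter]
      intro n
      have h2 : φ u ∈ φ^[n+1] '' Set.univ := by
        rw [hL] at huL
        exact Set.mem_iInter.1 huL (n+1)
      obtain ⟨x, -, hx⟩ := h2
      refine ⟨x, trivial, ?_⟩
      rw [Function.iterate_succ_apply'] at hx
      exact hφi hx
    exact interior_maximal hUL hUopen hk
  have hMn : ∀ k : K, k ∉ interior L → ∀ j, φ^[j] k ∉ interior L := by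
    intro k hk j
    induction j with
    | zero => simpa only [Function.iterate_zero_apply] using hk
    | succ j ih =>
      intro hc
      rw [Function.iterate_succ_apply'] at hc
      exact ih (hM _ hc)
  -- global weight bound on complement of interior L
  set A0 : ℝ := max ‖w‖ t with hA0def
  have hA0t : t ≤ A0 := le_max_right _ _
  have hA0w : ∀ x : K, ‖w x‖ ≤ A0 := fun x => le_trans (w.norm_coe_le_norm x) (le_max_left _ _)
  have hA0pos : 0 < A0 := lt_of_lt_of_le ht0 hA0t
  have hwfA : ∀ n k, ‖wf n k‖ ≤ A0 ^ n := by
    intro n k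
    induction n with
    | zero => simp [hwf0]
    | succ n ih =>
      rw [hwfs, pow_succ]
      calc ‖wf n k * w (φ^[n] k)‖ = ‖wf n k‖ * ‖w (φ^[n] k)‖ := norm_mul _ _
        _ ≤ A0^n * A0 := mul_le_mul ih (hA0w _) (norm_nonneg _) (by positivity)
  set Cb : ℝ := (A0 / t) ^ (p + m) with hCbdef
  have hdiv1 : 1 ≤ A0 / t := (one_le_div ht0).2 hA0t
  have hCb1 : 1 ≤ Cb := by simpa using pow_le_pow_left₀ zero_le_one hdiv1 (p+m)
  have hCb0 : 0 < Cb := lt_of_lt_of_le one_pos hCb1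
  have hstep : ∀ k, k ∉ interior L → ∀ n, p ≤ n → ‖wf m (φ^[n] k)‖ ≤ t^m := by
    intro k hk n hn
    have h1 : φ^[n] k ∈ V ∪ interior L := by
      have h2 : φ^[n] k = φ^[p] (φ^[n-p] k) := by
        rw [← Function.iterate_add_apply, Nat.add_sub_cancel' hn]
      rw [h2]; exact hp _
    rcases h1 with h | h
    · exact le_of_lt h
    · exact absurd h (hMn k hk n)
  have hwfbound : ∀ k, k ∉ interior L → ∀ n, ‖wf n k‖ ≤ Cb * t^n := by
    intro k hk n
    induction n using Nat.strong_induction_on with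
    | _ n ih =>
      by_cases hn : n < p + m
      · calc ‖wf n k‖ ≤ A0^n := hwfA n k
          _ = (A0/t)^n * t^n := by
              rw [← mul_pow, div_mul_cancel₀ _ (ne_of_gt ht0)]
          _ ≤ Cb * t^n := by
              apply mul_le_mul_of_nonneg_right _ (by positivity)
              exact pow_le_pow_right₀ hdiv1 (le_of_lt hn)
      · push_neg at hn
        have hm0 : m ≤ n := le_trans (Nat.le_add_left m p) hn
        have h1 : wf n k = wf (n-m) k * wf m (φ^[n-m] k) := by
          conv_lhs => rw [show n = (n - m) + m from (Nat.sub_add_cancel hm0).symm]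
          exact hwfadd _ _ _
        rw [h1, norm_mul]
        have h2 := ih (n - m) (by omega)
        have h3 := hstep k hk (n - m) (by omega)
        calc ‖wf (n-m) k‖ * ‖wf m (φ^[n-m] k)‖ ≤ (Cb * t^(n-m)) * t^m :=
              mul_le_mul h2 h3 (norm_nonneg _) (by positivity)
          _ = Cb * t^n := by rw [mul_assoc, ← pow_add, Nat.sub_add_cancel hm0]
  have hRS : ∀ f : C(K,ℂ), R (S f) = SL (R f) := by
    intro f
    ext k
    rw [hRapp, hSapp, hSLapp, hRapp, hRapp]
  -- the iteration identity
  have hiter : ∀ f : C(K,ℂ), ∀ k : K, ∀ n : ℕ,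
      lam ^ n * f k = (∑ j ∈ Finset.range n, lam ^ (n-1-j) * (wf j k * (S f) (φ^[j] k)))
        + wf n k * f (φ^[n] k) := by
    intro f k n
    induction n with
    | zero => simp [hwf0]
    | succ n ih =>
      have hpt : lam * f (φ^[n] k) = w (φ^[n] k) * f (φ^[n+1] k) + (S f) (φ^[n] k) := by
        rw [hSapp f (φ^[n] k), ← Function.iterate_succ_apply' φ n k]
        ring
      have hstep2 : lam * (∑ j ∈ Finset.range n, lam ^ (n-1-j) * (wf j k * (S f) (φ^[j] k)))
          = ∑ j ∈ Finset.range n, lam ^ (n-j) * (wf j k * (S f) (φ^[j] k)) := by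
        rw [Finset.mul_sum]
        apply Finset.sum_congr rfl
        intro j hj
        have hj' : j < n := Finset.mem_range.1 hj
        rw [show n - j = (n-1-j)+1 from by omega, pow_succ']
        ring
      calc lam ^ (n+1) * f k = lam * (lam ^ n * f k) := by ring
        _ = lam * (∑ j ∈ Finset.range n, lam ^ (n-1-j) * (wf j k * (S f) (φ^[j] k)))
            + wf n k * (lam * f (φ^[n] k)) := by rw [ih]; ring
        _ = (∑ j ∈ Finset.range n, lam ^ (n-j) * (wf j k * (S f) (φ^[j] k)))
            + (wf n k * (S f) (φ^[n] k) + wf (n+1) k * f (φ^[n+1] k)) := by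
            rw [hstep2, hpt, hwfs]; ring
        _ = (∑ j ∈ Finset.range (n+1), lam ^ (n-j) * (wf j k * (S f) (φ^[j] k)))
            + wf (n+1) k * f (φ^[n+1] k) := by
            rw [Finset.sum_range_succ, Nat.sub_self, pow_zero]; ring
        _ = (∑ j ∈ Finset.range (n+1), lam ^ ((n+1)-1-j) * (wf j k * (S f) (φ^[j] k)))
            + wf (n+1) k * f (φ^[n+1] k) := by
            simp only [Nat.add_sub_cancel]
  -- geometric sum bound
  have hlamt : 0 < ‖lam‖ - t := sub_pos.2 htlam
  have hlam0 : (0:ℝ) < ‖lam‖ := lt_trans ht0 htlam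
  have hgeom : ∀ n, (∑ j ∈ Finset.range n, ‖lam‖ ^ (n-1-j) * t^j) * (‖lam‖ - t) ≤ ‖lam‖^n := by
    intro n
    have hid := geom_sum₂_mul (R := ℝ) t ‖lam‖ n
    have hsum : (∑ j ∈ Finset.range n, ‖lam‖^(n-1-j) * t^j)
        = ∑ i ∈ Finset.range n, t^i * ‖lam‖^(n-1-i) :=
      Finset.sum_congr rfl fun j _ => mul_comm _ _
    rw [hsum]
    have h2 : (∑ i ∈ Finset.range n, t^i * ‖lam‖^(n-1-i)) * (‖lam‖ - t) = ‖lam‖^n - t^n := by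
      linear_combination -hid
    rw [h2]
    linarith [pow_nonneg ht0.le n]
  -- pointwise estimate on complement of interior L
  set C0 : ℝ := Cb / (‖lam‖ - t) with hC0def
  have hC00 : 0 ≤ C0 := le_of_lt (div_pos hCb0 hlamt)
  have hEpt : ∀ f : C(K,ℂ), ∀ k, k ∉ interior L → ‖f k‖ ≤ C0 * ‖S f‖ := by
    intro f k hk
    have key : ∀ n, ‖lam‖^n * ‖f k‖
        ≤ (Cb * ‖S f‖ / (‖lam‖ - t)) * ‖lam‖^n + Cb * t^n * ‖f‖ := by
      intro n
      have h1 := hiter f k n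
      have h2 : ‖lam‖^n * ‖f k‖ = ‖lam^n * f k‖ := by rw [norm_mul, norm_pow]
      rw [h2, h1]
      have h3 : ‖(∑ j ∈ Finset.range n, lam ^ (n-1-j) * (wf j k * (S f) (φ^[j] k)))
            + wf n k * f (φ^[n] k)‖
          ≤ (∑ j ∈ Finset.range n, ‖lam‖^(n-1-j) * (Cb * t^j) * ‖S f‖) + Cb * t^n * ‖f‖ := by
        refine le_trans (norm_add_le _ _) (add_le_add ?_ ?_)
        · refine le_trans (norm_sum_le _ _) (Finset.sum_le_sum fun j hj => ?_)
          rw [norm_mul, norm_mul, norm_pow]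
          have hb1 : ‖wf j k‖ ≤ Cb * t^j := hwfbound k hk j
          have hb2 : ‖(S f) (φ^[j] k)‖ ≤ ‖S f‖ := ContinuousMap.norm_coe_le_norm _ _
          calc ‖lam‖^(n-1-j) * (‖wf j k‖ * ‖(S f) (φ^[j] k)‖)
              ≤ ‖lam‖^(n-1-j) * ((Cb * t^j) * ‖S f‖) := by
                apply mul_le_mul_of_nonneg_left _ (by positivity)
                exact mul_le_mul hb1 hb2 (norm_nonneg _) (by positivity)
            _ = ‖lam‖^(n-1-j) * (Cb * t^j) * ‖S f‖ := by ring
        · rw [norm_mul]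
          exact mul_le_mul (hwfbound k hk n) (ContinuousMap.norm_coe_le_norm _ _)
            (norm_nonneg _) (by positivity)
      refine le_trans h3 ?_
      have h4 : (∑ j ∈ Finset.range n, ‖lam‖^(n-1-j) * (Cb * t^j) * ‖S f‖)
          = Cb * ‖S f‖ * (∑ j ∈ Finset.range n, ‖lam‖^(n-1-j) * t^j) := by
        rw [Finset.mul_sum]
        exact Finset.sum_congr rfl fun j _ => by ring
      rw [h4]
      have h5 : (∑ j ∈ Finset.range n, ‖lam‖^(n-1-j) * t^j) ≤ ‖lam‖^n / (‖lam‖ - t) :=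
        (le_div_iff₀ hlamt).2 (hgeom n)
      have h6 : Cb * ‖S f‖ * (∑ j ∈ Finset.range n, ‖lam‖^(n-1-j) * t^j)
          ≤ Cb * ‖S f‖ * (‖lam‖^n / (‖lam‖ - t)) :=
        mul_le_mul_of_nonneg_left h5 (by positivity)
      refine add_le_add (le_trans h6 (le_of_eq ?_)) le_rfl
      field_simp
    have hdiv : ∀ n : ℕ, ‖f k‖ ≤ Cb * ‖S f‖/(‖lam‖-t) + Cb * ‖f‖ * (t/‖lam‖)^n := by
      intro n
      have hln : 0 < ‖lam‖^n := pow_pos hlam0 n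
      rw [← mul_le_mul_iff_left₀ hln]
      calc ‖f k‖ * ‖lam‖^n = ‖lam‖^n * ‖f k‖ := mul_comm _ _
        _ ≤ (Cb * ‖S f‖ / (‖lam‖ - t)) * ‖lam‖^n + Cb * t^n * ‖f‖ := key n
        _ = (Cb * ‖S f‖/(‖lam‖-t) + Cb * ‖f‖ * (t/‖lam‖)^n) * ‖lam‖^n := by
            have hcl : (t/‖lam‖)^n * ‖lam‖^n = t^n := by
              rw [div_pow, div_mul_cancel₀ _ (ne_of_gt hln)]
            linear_combination (-(Cb * ‖f‖)) * hcl
    have hlim : Tendsto (fun n : ℕ => Cb * ‖S f‖/(‖lam‖-t) + Cb * ‖f‖ * (t/‖lam‖)^n)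
        atTop (𝓝 (Cb * ‖S f‖/(‖lam‖-t) + Cb * ‖f‖ * 0)) := by
      apply Tendsto.const_add
      apply Tendsto.const_mul
      exact tendsto_pow_atTop_nhds_zero_of_lt_one (by positivity) ((div_lt_one hlam0).2 htlam)
    have hfin := ge_of_tendsto hlim (Eventually.of_forall hdiv)
    calc ‖f k‖ ≤ Cb * ‖S f‖/(‖lam‖-t) + Cb * ‖f‖ * 0 := hfin
      _ = C0 * ‖S f‖ := by rw [hC0def]; ring
  -- the master estimate
  have hE : ∀ f : C(K,ℂ), ‖f‖ ≤ C0 * ‖S f‖ + ‖R f‖ := by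
    intro f
    refine (ContinuousMap.norm_le _ (add_nonneg (mul_nonneg hC00 (norm_nonneg _))
      (norm_nonneg _))).2 fun k => ?_
    by_cases hk : k ∈ interior L
    · have h1 := ContinuousMap.norm_coe_le_norm (R f) ⟨k, interior_subset hk⟩
      rw [hRapp] at h1
      calc ‖f k‖ ≤ ‖R f‖ := h1
        _ ≤ C0 * ‖S f‖ + ‖R f‖ :=
          le_add_of_nonneg_left (mul_nonneg hC00 (norm_nonneg _))
    · exact le_trans (hEpt f k hk) (le_add_of_nonneg_right (norm_nonneg _))
  -- finite-dimensionality of the kernel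
  haveI hkerSLfd : FiniteDimensional ℂ (LinearMap.ker (SL : C(L,ℂ) →ₗ[ℂ] C(L,ℂ))) := hSLker
  have hkerfin : FiniteDimensional ℂ (LinearMap.ker (S : C(K,ℂ) →ₗ[ℂ] C(K,ℂ))) := by
    have hmap : ∀ f : LinearMap.ker (S : C(K,ℂ) →ₗ[ℂ] C(K,ℂ)), R f.1 ∈ LinearMap.ker (SL : C(L,ℂ) →ₗ[ℂ] C(L,ℂ)) := by
      intro f
      have h0 : S f.1 = 0 := f.2
      rw [LinearMap.mem_ker, ContinuousLinearMap.coe_coe, ← hRS, h0, map_zero]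
    refine FiniteDimensional.of_injective
      ({ toFun := fun f => ⟨R f.1, hmap f⟩
         map_add' := fun a b => by ext1; simp
         map_smul' := fun c a => by ext1; simp } :
        LinearMap.ker (S : C(K,ℂ) →ₗ[ℂ] C(K,ℂ)) →ₗ[ℂ] LinearMap.ker (SL : C(L,ℂ) →ₗ[ℂ] C(L,ℂ))) ?_
    intro a b hab
    have h1 : R a.1 = R b.1 := congrArg Subtype.val hab
    have h3 : S (a.1 - b.1) = 0 := by
      rw [map_sub, (show S a.1 = 0 from LinearMap.mem_ker.1 a.2), (show S b.1 = 0 from LinearMap.mem_ker.1 b.2),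
        sub_zero]
    have h2 : ‖a.1 - b.1‖ ≤ C0 * ‖S (a.1 - b.1)‖ + ‖R (a.1 - b.1)‖ := hE _
    rw [h3, map_sub, h1, sub_self] at h2
    simp only [norm_zero, mul_zero, add_zero] at h2
    have h4 : a.1 - b.1 = 0 := norm_le_zero_iff.1 h2
    exact Subtype.ext (sub_eq_zero.1 h4)
  -- quantitative bound for SL from the abstract lemma
  obtain ⟨C1, hC10, hD⟩ := aux_infDist_bound SL hSLrange hSLker
  -- properness of S
  have hprop : ∀ (v : ℕ → C(K,ℂ)) (B : ℝ), (∀ n, ‖v n‖ ≤ B) →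
      ∀ gg : C(K,ℂ), Tendsto (fun n => S (v n)) atTop (𝓝 gg) →
      ∃ h : C(K,ℂ), ∃ ψ : ℕ → ℕ, StrictMono ψ ∧ Tendsto (fun n => v (ψ n)) atTop (𝓝 h) := by
    intro v B hB gg hgg
    set u : ℕ → C(L,ℂ) := fun n => R (v n) with hudef
    have hu : Tendsto (fun n => SL (u n)) atTop (𝓝 (R gg)) := by
      have heq : (fun n => SL (u n)) = fun n => R (S (v n)) := by
        funext n; rw [hudef, ← hRS]
      rw [heq]
      exact (R.continuous.tendsto gg).comp hgg
    obtain ⟨vv, hvv⟩ := hSLrange.mem_of_tendsto hu (Eventually.of_forall fun n => ⟨u n, rfl⟩)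
    have hdist : ∀ n, Metric.infDist (u n - vv) (LinearMap.ker (SL : C(L,ℂ) →ₗ[ℂ] C(L,ℂ)) : Set C(L,ℂ))
        ≤ C1 * ‖SL (u n) - R gg‖ := by
      intro n
      have h1 := hD (u n - vv)
      rwa [map_sub, hvv] at h1
    have hsel : ∀ n : ℕ, ∃ kk, kk ∈ LinearMap.ker (SL : C(L,ℂ) →ₗ[ℂ] C(L,ℂ)) ∧
        ‖u n - vv - kk‖ ≤ C1 * ‖SL (u n) - R gg‖ + 1 / (n+1) := by
      intro n
      have hpos : (0:ℝ) < 1/(n+1) := by positivity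
      have h2 : Metric.infDist (u n - vv) (LinearMap.ker (SL : C(L,ℂ) →ₗ[ℂ] C(L,ℂ)) : Set C(L,ℂ))
          < C1 * ‖SL (u n) - R gg‖ + 1/(n+1) := lt_of_le_of_lt (hdist n) (by linarith)
      obtain ⟨kk, hk1, hk2⟩ := (Metric.infDist_lt_iff ⟨0, Submodule.zero_mem _⟩).1 h2
      exact ⟨kk, hk1, by rw [← dist_eq_norm]; exact hk2.le⟩
    choose kk hkk1 hkk2 using hsel
    have hnorm0 : Tendsto (fun n => ‖SL (u n) - R gg‖) atTop (𝓝 0) := by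
      have h1 : Tendsto (fun n => SL (u n) - R gg) atTop (𝓝 (R gg - R gg)) :=
        hu.sub_const (R gg)
      rw [sub_self] at h1
      simpa using h1.norm
    have hevb : ∀ᶠ n in atTop, ‖SL (u n) - R gg‖ ≤ 1 :=
      (hnorm0.eventually_lt_const one_pos).mono fun n hn => hn.le
    obtain ⟨N1, hN1⟩ := eventually_atTop.1 hevb
    have hkkb : ∀ n, N1 ≤ n → ‖kk n‖ ≤ B + ‖vv‖ + C1 + 1 := by
      intro n hn
      have h1 : ‖u n - vv - kk n‖ ≤ C1 * 1 + 1 := by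
        refine le_trans (hkk2 n) (add_le_add ?_ ?_)
        · exact mul_le_mul_of_nonneg_left (hN1 n hn) hC10
        · rw [div_le_one (by positivity)]
          have : (1:ℝ) ≤ (n:ℝ) + 1 := by
            have : (0:ℝ) ≤ (n:ℝ) := Nat.cast_nonneg n
            linarith
          linarith
      have h2 : ‖u n‖ ≤ B := le_trans (hRle (v n)) (hB n)
      have h3 : kk n = (u n - vv) - ((u n - vv) - kk n) := by abel
      calc ‖kk n‖ = ‖(u n - vv) - ((u n - vv) - kk n)‖ := by rw [← h3]
        _ ≤ ‖u n - vv‖ + ‖(u n - vv) - kk n‖ := norm_sub_le _ _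
        _ ≤ (‖u n‖ + ‖vv‖) + (C1 * 1 + 1) := add_le_add (norm_sub_le _ _) h1
        _ ≤ B + ‖vv‖ + C1 + 1 := by linarith
    haveI : ProperSpace (LinearMap.ker (SL : C(L,ℂ) →ₗ[ℂ] C(L,ℂ))) := FiniteDimensional.proper ℂ _
    set k' : ℕ → (LinearMap.ker (SL : C(L,ℂ) →ₗ[ℂ] C(L,ℂ))) := fun n => ⟨kk (N1 + n), hkk1 _⟩ with hk'def
    have hk'b : ∀ n, k' n ∈ Metric.closedBall (0 : LinearMap.ker (SL : C(L,ℂ) →ₗ[ℂ] C(L,ℂ))) (B + ‖vv‖ + C1 + 1) := by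
      intro n
      rw [Metric.mem_closedBall, dist_zero_right]
      exact hkkb _ (Nat.le_add_right _ _)
    obtain ⟨a, -, ψ, hψmono, hψtend⟩ :=
      tendsto_subseq_of_bounded Metric.isBounded_closedBall hk'b
    have hkktend : Tendsto (fun n => kk (N1 + ψ n)) atTop (𝓝 ((a : C(L,ℂ)))) :=
      (continuous_subtype_val.tendsto a).comp hψtend
    have hθmono : StrictMono (fun n => N1 + ψ n) := fun a b h =>
      Nat.add_lt_add_left (hψmono h) N1
    have hθtop : Tendsto (fun n => N1 + ψ n) atTop atTop := hθmono.tendsto_atTop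
    have hzero : Tendsto (fun n => u (N1 + ψ n) - vv - kk (N1 + ψ n)) atTop (𝓝 0) := by
      apply squeeze_zero_norm (fun n => hkk2 (N1 + ψ n))
      have h1 : Tendsto (fun n => C1 * ‖SL (u (N1 + ψ n)) - R gg‖) atTop (𝓝 (C1 * 0)) :=
        ((hnorm0.comp hθtop).const_mul C1)
      have h2 : Tendsto (fun n : ℕ => 1 / ((N1 + ψ n : ℕ) + 1 : ℝ)) atTop (𝓝 0) :=
        tendsto_one_div_add_atTop_nhds_zero_nat.comp hθtop
      have := h1.add h2
      simpa using this
    have hutend : Tendsto (fun n => u (N1 + ψ n)) atTop (𝓝 (vv + (a : C(L,ℂ)))) := by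
      have heq : (fun n => u (N1 + ψ n))
          = fun n => (u (N1 + ψ n) - vv - kk (N1 + ψ n)) + vv + kk (N1 + ψ n) := by
        funext n; abel
      rw [heq]
      have hstep3 : Tendsto (fun n => (u (N1 + ψ n) - vv - kk (N1 + ψ n)) + vv)
          atTop (𝓝 (0 + vv)) := hzero.add (tendsto_const_nhds (x := vv))
      have := hstep3.add hkktend
      simpa using this
    have hSc : CauchySeq (fun n => S (v (N1 + ψ n))) := (hgg.comp hθtop).cauchySeq
    have huc : CauchySeq (fun n => u (N1 + ψ n)) := hutend.cauchySeq
    have hvc : CauchySeq (fun n => v (N1 + ψ n)) := by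
      rw [Metric.cauchySeq_iff] at hSc huc ⊢
      intro ε hε
      obtain ⟨Na, hNa⟩ := hSc (ε / (2 * (C0+1))) (by positivity)
      obtain ⟨Nb, hNb⟩ := huc (ε / 2) (by positivity)
      refine ⟨max Na Nb, fun m hm n hn => ?_⟩
      have h1 := hNa m (le_trans (le_max_left _ _) hm) n (le_trans (le_max_left _ _) hn)
      have h2 := hNb m (le_trans (le_max_right _ _) hm) n (le_trans (le_max_right _ _) hn)
      have h3 := hE (v (N1 + ψ m) - v (N1 + ψ n))
      rw [dist_eq_norm] at h1 h2 ⊢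
      have hc0 : C0 * ‖S (v (N1 + ψ m)) - S (v (N1 + ψ n))‖ ≤ C0 * (ε / (2*(C0+1))) :=
        mul_le_mul_of_nonneg_left h1.le hC00
      have hc1 : C0 * (ε/(2*(C0+1))) ≤ ε/2 := by
        have hq : C0 / (C0+1) ≤ 1 := by
          rw [div_le_one (by linarith)]; linarith
        have he : C0 * (ε/(2*(C0+1))) = ε/2 * (C0/(C0+1)) := by
          field_simp
        rw [he]
        calc ε/2 * (C0/(C0+1)) ≤ ε/2 * 1 :=
              mul_le_mul_of_nonneg_left hq (by positivity)
          _ = ε/2 := mul_one _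
      calc ‖v (N1 + ψ m) - v (N1 + ψ n)‖
          ≤ C0 * ‖S (v (N1 + ψ m) - v (N1 + ψ n))‖ + ‖R (v (N1 + ψ m) - v (N1 + ψ n))‖ := h3
        _ = C0 * ‖S (v (N1 + ψ m)) - S (v (N1 + ψ n))‖ + ‖u (N1 + ψ m) - u (N1 + ψ n)‖ := by
            rw [map_sub, map_sub]
        _ < ε := by linarith
    obtain ⟨h, hh⟩ := cauchySeq_tendsto_of_complete hvc
    exact ⟨h, (fun n => N1 + ψ n), hθmono, hh⟩
  -- closedness of the range
  have hclosed : IsClosed (Set.range S) := by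
    refine isClosed_of_closure_subset ?_
    intro g hg
    obtain ⟨y, hy, hygg⟩ := mem_closure_iff_seq_limit.1 hg
    choose f hf using hy
    have hyS : Tendsto (fun n => S (f n)) atTop (𝓝 g) := by
      have heq : (fun n => S (f n)) = y := funext hf
      rw [heq]; exact hygg
    set d : ℕ → ℝ := fun n => Metric.infDist (f n) (LinearMap.ker (S : C(K,ℂ) →ₗ[ℂ] C(K,ℂ)) : Set C(K,ℂ)) with hddef
    by_cases hcase : Tendsto d atTop atTop
    · exfalso
      obtain ⟨N0, hN0⟩ := eventually_atTop.1 (hcase.eventually_ge_atTop 1)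
      have hsel : ∀ n : ℕ, ∃ kkn, kkn ∈ LinearMap.ker (S : C(K,ℂ) →ₗ[ℂ] C(K,ℂ)) ∧ ‖f n - kkn‖ ≤ d n + 1 := by
        intro n
        have h2 : Metric.infDist (f n) (LinearMap.ker (S : C(K,ℂ) →ₗ[ℂ] C(K,ℂ)) : Set C(K,ℂ)) < d n + 1 := by
          have h0 : d n = Metric.infDist (f n) (LinearMap.ker (S : C(K,ℂ) →ₗ[ℂ] C(K,ℂ)) : Set C(K,ℂ)) := rfl
          rw [← h0]; linarith
        obtain ⟨kkn, hk1, hk2⟩ := (Metric.infDist_lt_iff ⟨0, Submodule.zero_mem _⟩).1 h2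
        exact ⟨kkn, hk1, by rw [← dist_eq_norm]; exact hk2.le⟩
      choose kn hkn1 hkn2 using hsel
      set vs : ℕ → C(K,ℂ) := fun n => (((d n)⁻¹ : ℝ) : ℂ) • (f n - kn n) with hvsdef
      have hyb : ∀ᶠ n in atTop, ‖S (f n)‖ ≤ ‖g‖ + 1 := by
        have h1 : Tendsto (fun n => ‖S (f n)‖) atTop (𝓝 ‖g‖) := hyS.norm
        exact (h1.eventually_lt_const (by linarith)).mono fun n hn => hn.le
      obtain ⟨N1, hN1⟩ := eventually_atTop.1 hyb
      have hdpos : ∀ n, N0 ≤ n → (0:ℝ) < d n := fun n hn => lt_of_lt_of_le one_pos (hN0 n hn)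
      have hvb : ∀ n, N0 ≤ n → ‖vs n‖ ≤ 2 := by
        intro n hn
        rw [hvsdef]
        have h1 : ‖(((d n)⁻¹ : ℝ) : ℂ)‖ = (d n)⁻¹ := by
          rw [Complex.norm_real, Real.norm_eq_abs, abs_of_pos (inv_pos.2 (hdpos n hn))]
        rw [norm_smul, h1]
        have h2 : ‖f n - kn n‖ ≤ d n + 1 := hkn2 n
        have h3 : (d n)⁻¹ * ‖f n - kn n‖ ≤ (d n)⁻¹ * (d n + 1) :=
          mul_le_mul_of_nonneg_left h2 (inv_nonneg.2 (hdpos n hn).le)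
        refine le_trans h3 ?_
        rw [inv_mul_le_iff₀ (hdpos n hn)]
        have := hN0 n hn
        linarith
      have hvS : Tendsto (fun n => S (vs n)) atTop (𝓝 0) := by
        have hb2 : ∀ᶠ n in atTop, ‖S (vs n)‖ ≤ (d n)⁻¹ * (‖g‖ + 1) := by
          rw [eventually_atTop]
          refine ⟨max N0 N1, fun n hn => ?_⟩
          have hn0 : N0 ≤ n := le_trans (le_max_left _ _) hn
          have hn1 : N1 ≤ n := le_trans (le_max_right _ _) hn
          have h1 : S (vs n) = (((d n)⁻¹ : ℝ) : ℂ) • (S (f n) - S (kn n)) := by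
            rw [hvsdef, map_smul, map_sub]
          have h2 : S (kn n) = 0 := LinearMap.mem_ker.1 (hkn1 n)
          rw [h1, h2, sub_zero, norm_smul, Complex.norm_real, Real.norm_eq_abs,
            abs_of_pos (inv_pos.2 (hdpos n hn0))]
          exact mul_le_mul_of_nonneg_left (hN1 n hn1) (inv_nonneg.2 (hdpos n hn0).le)
        have hb3 : Tendsto (fun n => (d n)⁻¹ * (‖g‖ + 1)) atTop (𝓝 0) := by
          have h1 : Tendsto (fun n => (d n)⁻¹) atTop (𝓝 0) :=
            tendsto_inv_atTop_zero.comp hcase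
          simpa using h1.mul_const (‖g‖ + 1)
        exact squeeze_zero_norm' hb2 hb3
      have hvS' : Tendsto (fun n => S (vs (n + N0))) atTop (𝓝 0) := by
        have h3 : Tendsto (fun n : ℕ => n + N0) atTop atTop := tendsto_add_atTop_nat N0
        exact hvS.comp h3
      obtain ⟨h, ψ, hψm, hψt⟩ := hprop (fun n => vs (n + N0)) 2
        (fun n => hvb _ (Nat.le_add_left _ _)) 0 hvS'
      have hSh : S h = 0 := by
        have h1 : Tendsto (fun n => S (vs (ψ n + N0))) atTop (𝓝 (S h)) :=
          (S.continuous.tendsto h).comp hψt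
        have h2 : Tendsto (fun n => S (vs (ψ n + N0))) atTop (𝓝 0) := by
          have h3 : Tendsto (fun n => ψ n + N0) atTop atTop :=
            tendsto_atTop_mono (fun n => Nat.le_add_right _ _) hψm.tendsto_atTop
          exact hvS.comp h3
        exact tendsto_nhds_unique h1 h2
      have hhker : h ∈ LinearMap.ker (S : C(K,ℂ) →ₗ[ℂ] C(K,ℂ)) := LinearMap.mem_ker.2 hSh
      have hlb : ∀ j, N0 ≤ j → 1 ≤ ‖vs j - h‖ := by
        intro j hj
        have hdj : 1 ≤ d j := hN0 j hj
        have hdj0 : (0:ℝ) < d j := by linarith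
        have hmemk : kn j + ((d j : ℝ) : ℂ) • h ∈ LinearMap.ker (S : C(K,ℂ) →ₗ[ℂ] C(K,ℂ)) :=
          Submodule.add_mem _ (hkn1 j) (Submodule.smul_mem _ _ hhker)
        have h1 : d j ≤ ‖f j - (kn j + ((d j : ℝ) : ℂ) • h)‖ := by
          have h2 := Metric.infDist_le_dist_of_mem (x := f j) hmemk
          rw [dist_eq_norm] at h2
          exact h2
        have h2 : f j - (kn j + ((d j:ℝ):ℂ) • h) = ((d j : ℝ) : ℂ) • (vs j - h) := by
          rw [hvsdef, smul_sub, smul_smul]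
          have h3 : ((d j:ℝ):ℂ) * (((d j)⁻¹:ℝ):ℂ) = 1 := by
            rw [← Complex.ofReal_mul, mul_inv_cancel₀ (ne_of_gt hdj0), Complex.ofReal_one]
          rw [h3, one_smul]
          abel
        have h3 : ‖((d j:ℝ):ℂ) • (vs j - h)‖ = d j * ‖vs j - h‖ := by
          rw [norm_smul, Complex.norm_real, Real.norm_eq_abs, abs_of_pos hdj0]
        rw [h2, h3] at h1
        nlinarith [norm_nonneg (vs j - h)]
      have hconv : Tendsto (fun n => ‖vs (ψ n + N0) - h‖) atTop (𝓝 0) := by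
        have h1 : Tendsto (fun n => vs (ψ n + N0) - h) atTop (𝓝 (h - h)) :=
          hψt.sub_const h
        rw [sub_self] at h1
        simpa using h1.norm
      obtain ⟨n, hn⟩ := (hconv.eventually_lt_const one_pos).exists
      exact absurd hn (not_lt.2 (hlb _ (Nat.le_add_left _ _)))
    · rw [tendsto_atTop] at hcase
      push_neg at hcase
      obtain ⟨b, hb⟩ := hcase
      have hfreq : ∃ᶠ n in atTop, d n < b := hb
      obtain ⟨ψ, hψm, hψp⟩ := extraction_of_frequently_atTop hfreq
      have hsel : ∀ n : ℕ, ∃ kkn, kkn ∈ LinearMap.ker (S : C(K,ℂ) →ₗ[ℂ] C(K,ℂ)) ∧ ‖f (ψ n) - kkn‖ ≤ b + 1 := by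
        intro n
        have h2 : Metric.infDist (f (ψ n)) (LinearMap.ker (S : C(K,ℂ) →ₗ[ℂ] C(K,ℂ)) : Set C(K,ℂ)) < b + 1 := by
          have := hψp n
          rw [hddef] at this
          linarith
        obtain ⟨kkn, hk1, hk2⟩ := (Metric.infDist_lt_iff ⟨0, Submodule.zero_mem _⟩).1 h2
        exact ⟨kkn, hk1, by rw [← dist_eq_norm]; exact hk2.le⟩
      choose kn hkn1 hkn2 using hsel
      have hSa : Tendsto (fun n => S (f (ψ n) - kn n)) atTop (𝓝 g) := by
        have heq : (fun n => S (f (ψ n) - kn n)) = fun n => S (f (ψ n)) := by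
          funext n
          rw [map_sub, (show S (kn n) = 0 from LinearMap.mem_ker.1 (hkn1 n)), sub_zero]
        rw [heq]
        exact hyS.comp hψm.tendsto_atTop
      obtain ⟨h, ψ2, hψ2m, hψ2t⟩ := hprop (fun n => f (ψ n) - kn n) (b+1) hkn2 g hSa
      have h1 : Tendsto (fun n => S (f (ψ (ψ2 n)) - kn (ψ2 n))) atTop (𝓝 (S h)) :=
        (S.continuous.tendsto h).comp hψ2t
      have h2 : Tendsto (fun n => S (f (ψ (ψ2 n)) - kn (ψ2 n))) atTop (𝓝 g) :=
        hSa.comp hψ2m.tendsto_atTop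
      exact ⟨h, tendsto_nhds_unique h1 h2⟩
  exact ⟨hclosed, hkerfin⟩
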